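/- Let n ≥ 1, let α, β satisfy 0 ≤ α < 1/(n+1) and 0 ≤ β < 1/(n+1), and let Φ ∈ COMFORT(Δ_n) be such that Φ restricts to a homeomorphism of ♣_{n,α} onto ♣_{n,β}. Let x ∈ Δ_n \ ♣_{n,α}. Then for every index i ∈ {0,…,n}: x_i < α if and only if Φ(x)_i < β, and x_i > α if and only if Φ(x)_i > β. In particular α < min_j x_j if and only if β < min_j Φ(x)_j. -/

import Mathlib

open scoped BigOperators

noncomputable section

/-- `Spx k` is the standard simplex on `k` coordinates, i.e. the standard simplex
`Δ_{k-1}` of the paper, as a subspace of `ℝ^k`. -/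
abbrev Spx (k : ℕ) : Type := {x : Fin k → ℝ // x ∈ stdSimplex ℝ (Fin k)}

lemma perm_mem {k : ℕ} (ϑ : Equiv.Perm (Fin k)) {x : Fin k → ℝ}
    (hx : x ∈ stdSimplex ℝ (Fin k)) :
    (fun i => x (ϑ i)) ∈ stdSimplex ℝ (Fin k) :=
  ⟨fun i => hx.1 (ϑ i), (Equiv.sum_comp ϑ x).trans hx.2⟩

/-- membership of `COMFORT (Δ_n)`: a self-homeomorphism of the standard simplex which
(i) respects coordinate permutations and (ii) keeps the order. -/
structure IsComfort {n : ℕ} (F : Spx (n+1) ≃ₜ Spx (n+1)) : Prop where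
  perm : ∀ (ϑ : Equiv.Perm (Fin (n+1))) (x : Spx (n+1)),
      ((F ⟨fun i => x.1 (ϑ i), perm_mem ϑ x.2⟩ : Spx (n+1)) : Fin (n+1) → ℝ)
        = fun i => (F x).1 (ϑ i)
  mono : ∀ (x : Spx (n+1)) (i j : Fin (n+1)), x.1 i ≤ x.1 j → (F x).1 i ≤ (F x).1 j

/-- the `α`-cross `♣_{n,α}` of `Δ_n`. -/
def cross (n : ℕ) (α : ℝ) : Set (Spx (n+1)) := {x | ∃ j, x.1 j = α}

/-- the boundary `BOU_n = ♣_{n,0}` of `Δ_n`. -/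
def bou (n : ℕ) : Set (Spx (n+1)) := cross n 0

/-- the barycenter `Center_n` of `Δ_n`. -/
def center (n : ℕ) : Spx (n+1) :=
  ⟨fun _ => 1/((n:ℝ)+1), by
    constructor
    · intro i
      positivity
    · rw [Finset.sum_const, Finset.card_univ, Fintype.card_fin, nsmul_eq_mul]
      push_cast
      field_simp⟩

/-- the minimal coordinate of a point of `Δ_n`. -/
def minCoord {n : ℕ} (x : Spx (n+1)) : ℝ :=
  Finset.univ.inf' Finset.univ_nonempty x.1

/-- the `α`-layer `Layer_{n,α}` of `Δ_n`. -/
def layer (n : ℕ) (α : ℝ) : Set (Spx (n+1)) := {x | minCoord x = α}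

/-- `Sponge (Δ_n)`: the points of `Δ_n` with pairwise distinct coordinates. -/
def sponge (n : ℕ) : Set (Spx (n+1)) := {x | ∀ i j, x.1 i = x.1 j → i = j}


/-- convex combination of two numbers below `c` stays below `c`. -/
lemma combo_lt {a b c t : ℝ} (ha : a < c) (hb : b < c) (h0 : 0 ≤ t) (h1 : t ≤ 1) :
    (1 - t) * a + t * b < c := by
  have h2 : (1 - t) * a + t * b ≤ (1 - t) * (max a b) + t * (max a b) :=
    add_le_add (mul_le_mul_of_nonneg_left (le_max_left a b) (by linarith))
      (mul_le_mul_of_nonneg_left (le_max_right a b) h0)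
  have h3 : (1 - t) * (max a b) + t * (max a b) = max a b := by ring
  exact lt_of_le_of_lt (h2.trans_eq h3) (max_lt ha hb)

lemma combo_gt {a b c t : ℝ} (ha : c < a) (hb : c < b) (h0 : 0 ≤ t) (h1 : t ≤ 1) :
    c < (1 - t) * a + t * b := by
  have h2 : (1 - t) * (min a b) + t * (min a b) ≤ (1 - t) * a + t * b :=
    add_le_add (mul_le_mul_of_nonneg_left (min_le_left a b) (by linarith))
      (mul_le_mul_of_nonneg_left (min_le_right a b) h0)
  have h3 : (1 - t) * (min a b) + t * (min a b) = min a b := by ring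
  exact lt_of_lt_of_le (lt_min ha hb) (h3 ▸ h2)

/-- sign constancy of coordinates of images of points with the same off-cross pattern,
for a continuous map sending the complement of the `α`-cross into the complement of the
`β`-cross. -/
lemma key_lemma {k : ℕ} {α β : ℝ} (G : Spx k → Spx k) (hGc : Continuous G)
    (hG : ∀ z : Spx k, (∀ j, z.1 j ≠ α) → ∀ j, (G z).1 j ≠ β)
    (x y : Spx k) (hxy : ∀ j, (x.1 j < α ↔ y.1 j < α))
    (hxa : ∀ j, x.1 j ≠ α) (hya : ∀ j, y.1 j ≠ α)
    (i : Fin k) (h : (G x).1 i < β) : (G y).1 i < β := by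
  by_contra hcon
  have hy2 : β < (G y).1 i := lt_of_le_of_ne (not_lt.mp hcon) (Ne.symm (hG y hya i))
  set s : ℝ → ℝ := fun t => ((Set.projIcc (0:ℝ) 1 zero_le_one t : Set.Icc (0:ℝ) 1) : ℝ)
    with hs
  have hs0 : ∀ t, 0 ≤ s t := fun t => (Set.projIcc (0:ℝ) 1 zero_le_one t).2.1
  have hs1 : ∀ t, s t ≤ 1 := fun t => (Set.projIcc (0:ℝ) 1 zero_le_one t).2.2
  have hscont : Continuous s := continuous_subtype_val.comp continuous_projIcc
  have hmem : ∀ t : ℝ, ((1 - s t) • x.1 + s t • y.1) ∈ stdSimplex ℝ (Fin k) := fun t =>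
    (convex_stdSimplex ℝ (Fin k)) x.2 y.2 (by linarith [hs1 t]) (hs0 t) (by ring)
  set p : ℝ → Spx k := fun t => ⟨(1 - s t) • x.1 + s t • y.1, hmem t⟩ with hp
  have hpc : Continuous p := by
    apply Continuous.subtype_mk
    exact ((continuous_const.sub hscont).smul continuous_const).add
      (hscont.smul continuous_const)
  have hs0' : s 0 = 0 := by rw [hs]; simp [Set.projIcc_left]
  have hs1' : s 1 = 1 := by rw [hs]; simp [Set.projIcc_right]
  have hp0 : p 0 = x := by
    apply Subtype.ext
    simp [hp, hs0']
  have hp1 : p 1 = y := by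
    apply Subtype.ext
    simp [hp, hs1']
  have hfne : ∀ t, (G (p t)).1 i ≠ β := by
    intro t
    apply hG (p t)
    intro j
    have hcoord : (p t).1 j = (1 - s t) * x.1 j + s t * y.1 j := by
      simp [hp, smul_eq_mul]
    by_cases hj : x.1 j < α
    · have hyj : y.1 j < α := (hxy j).1 hj
      have : (p t).1 j < α := by
        rw [hcoord]; exact combo_lt hj hyj (hs0 t) (hs1 t)
      exact ne_of_lt this
    · have hxj : α < x.1 j := lt_of_le_of_ne (not_lt.mp hj) (Ne.symm (hxa j))
      have hyj' : ¬ y.1 j < α := fun hy' => hj ((hxy j).2 hy')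
      have hyj : α < y.1 j := lt_of_le_of_ne (not_lt.mp hyj') (Ne.symm (hya j))
      have : α < (p t).1 j := by
        rw [hcoord]; exact combo_gt hxj hyj (hs0 t) (hs1 t)
      exact ne_of_gt this
  have hfc : Continuous fun t => (G (p t)).1 i :=
    (continuous_apply i).comp (continuous_subtype_val.comp (hGc.comp hpc))
  have hIcc := intermediate_value_Icc (zero_le_one (α := ℝ)) hfc.continuousOn
  have hβmem : β ∈ Set.Icc ((G (p 0)).1 i) ((G (p 1)).1 i) := by
    rw [hp0, hp1]
    exact ⟨h.le, hy2.le⟩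
  obtain ⟨t, _, ht⟩ := hIcc hβmem
  exact hfne t ht

/-- a comfortable homeomorphism fixes the barycenter. -/
lemma center_fixed {n : ℕ} (Φ : Spx (n+1) ≃ₜ Spx (n+1)) (hΦ : IsComfort Φ) :
    Φ (center n) = center n := by
  set w := Φ (center n) with hw
  have hconst : ∀ i j : Fin (n+1), w.1 i = w.1 j := fun i j =>
    le_antisymm (hΦ.mono (center n) i j (le_of_eq rfl))
      (hΦ.mono (center n) j i (le_of_eq rfl))
  have hval : ∀ i : Fin (n+1), w.1 i = 1/((n:ℝ)+1) := by
    intro i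
    have hsum := w.2.2
    have h1 : ∑ j : Fin (n+1), w.1 j = ((n:ℝ)+1) * w.1 i := by
      rw [Finset.sum_congr rfl (fun j _ => hconst j i), Finset.sum_const,
        Finset.card_univ, Fintype.card_fin, nsmul_eq_mul]
      push_cast
      ring
    have hpos : ((n:ℝ)+1) ≠ 0 := by positivity
    rw [hsum] at h1
    field_simp at h1 ⊢
    linarith
  exact Subtype.ext (funext fun i => hval i)

theorem comfort_offcross_component_comparisons (n : ℕ) (hn : 1 ≤ n) (α β : ℝ)
    (hα0 : 0 ≤ α) (hα1 : α < 1/((n:ℝ)+1))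
    (hβ0 : 0 ≤ β) (hβ1 : β < 1/((n:ℝ)+1))
    (Φ : Spx (n+1) ≃ₜ Spx (n+1)) (hΦ : IsComfort Φ)
    (hmap : ⇑Φ '' cross n α = cross n β)
    (x : Spx (n+1)) (hx : x ∉ cross n α) :
    (∀ i : Fin (n+1), (x.1 i < α ↔ (Φ x).1 i < β) ∧ (α < x.1 i ↔ β < (Φ x).1 i)) ∧
    (α < minCoord x ↔ β < minCoord (Φ x)) := by
  have hx' : ∀ j, x.1 j ≠ α := fun j hj => hx ⟨j, hj⟩
  -- Φ maps off-cross points to off-cross points, and so does its inverse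
  have hΦoff : ∀ z : Spx (n+1), (∀ j, z.1 j ≠ α) → ∀ j, (Φ z).1 j ≠ β := by
    intro z hz j hj
    have hmem : Φ z ∈ cross n β := ⟨j, hj⟩
    rw [← hmap] at hmem
    obtain ⟨w, hw, hwz⟩ := hmem
    obtain ⟨jw, hjw⟩ := hw
    have hwz' : w = z := Φ.injective hwz
    exact hz jw (hwz' ▸ hjw)
  have hΦinvoff : ∀ z : Spx (n+1), (∀ j, z.1 j ≠ β) → ∀ j, (Φ.symm z).1 j ≠ α := by
    intro z hz j hj
    have hmem : z ∈ cross n β := by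
      rw [← hmap]
      exact ⟨Φ.symm z, ⟨j, hj⟩, Φ.apply_symm_apply z⟩
    obtain ⟨jw, hjw⟩ := hmem
    exact hz jw hjw
  have hΦx' : ∀ j, (Φ x).1 j ≠ β := hΦoff x hx'
  -- center facts
  have hcenα : ∀ j : Fin (n+1), (center n).1 j ≠ α := fun j => ne_of_gt hα1
  have hcenβ : ∀ j : Fin (n+1), (center n).1 j ≠ β := fun j => ne_of_gt hβ1
  have hcenαlt : ∀ j : Fin (n+1), ¬ (center n).1 j < α := fun j => not_lt.mpr hα1.le
  have hcenβlt : ∀ j : Fin (n+1), ¬ (center n).1 j < β := fun j => not_lt.mpr hβ1.le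
  have hcfix := center_fixed Φ hΦ
  have hcfixinv : Φ.symm (center n) = center n := by
    conv_lhs => rw [← hcfix]
    exact Φ.symm_apply_apply (center n)
  -- all coordinates below β on the simplex is impossible
  have hsumcontra : ∀ w : Spx (n+1), (∀ j, w.1 j < β) → False := by
    intro w hall
    have h1 : (1:ℝ) < 1 := by
      calc (1:ℝ) = ∑ j, w.1 j := w.2.2.symm
        _ < ∑ _j : Fin (n+1), β :=
            Finset.sum_lt_sum_of_nonempty Finset.univ_nonempty (fun j _ => hall j)
        _ = ((n:ℝ)+1) * β := by
            rw [Finset.sum_const, Finset.card_univ, Fintype.card_fin, nsmul_eq_mul]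
            push_cast; ring
        _ < 1 := by
            have hpos : (0:ℝ) < (n:ℝ)+1 := by positivity
            calc ((n:ℝ)+1) * β < ((n:ℝ)+1) * (1/((n:ℝ)+1)) :=
                  (mul_lt_mul_iff_right₀ hpos).mpr hβ1
              _ = 1 := by field_simp
    exact absurd h1 (lt_irrefl 1)
  -- the key coordinatewise comparison
  have key : ∀ i, (x.1 i < α ↔ (Φ x).1 i < β) := by
    by_cases hS : ∃ i0, x.1 i0 < α
    · obtain ⟨i0, hi0⟩ := hS
      have hα : 0 < α := lt_of_le_of_lt (x.2.1 i0) hi0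
      -- there is a big coordinate
      obtain ⟨j0, _, hj0⟩ := Finset.exists_le_of_sum_le (s := (Finset.univ : Finset (Fin (n+1))))
        (f := fun _ => 1/((n:ℝ)+1)) (g := x.1) Finset.univ_nonempty
        (by
          rw [Finset.sum_const, Finset.card_univ, Fintype.card_fin, nsmul_eq_mul, x.2.2]
          push_cast
          rw [mul_one_div]
          field_simp
          exact le_refl 1)
      have hj0α : α < x.1 j0 := lt_of_lt_of_le hα1 hj0
      have hj0S : ¬ x.1 j0 < α := not_lt.mpr hj0α.le
      -- cardinality of the small-coordinate pattern
      set S : Finset (Fin (n+1)) := Finset.univ.filter (fun i => x.1 i < α) with hSdef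
      have hi0S : i0 ∈ S := Finset.mem_filter.mpr ⟨Finset.mem_univ _, hi0⟩
      have hj0S' : j0 ∉ S := fun h => hj0S (Finset.mem_filter.mp h).2
      have hcardS : S.card ≤ n := by
        have hsub : S ⊆ Finset.univ.erase j0 := fun i hi =>
          Finset.mem_erase.mpr ⟨fun h => hj0S' (h ▸ hi), Finset.mem_univ i⟩
        calc S.card ≤ (Finset.univ.erase j0).card := Finset.card_le_card hsub
          _ = n := by
              rw [Finset.card_erase_of_mem (Finset.mem_univ j0),
                Finset.card_univ, Fintype.card_fin]
              omega
      have hScard_pos : (0:ℝ) ≤ (S.card : ℝ) := Nat.cast_nonneg _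
      have hdenpos : (0:ℝ) < ((n:ℝ)+1) - (S.card : ℝ) := by
        have : (S.card : ℝ) ≤ (n : ℝ) := by exact_mod_cast hcardS
        linarith
      set b : ℝ := (1 - (S.card : ℝ) * (α/2)) / (((n:ℝ)+1) - (S.card : ℝ)) with hbdef
      have hone : ((n:ℝ)+1) * α < 1 := by
        have hpos : (0:ℝ) < (n:ℝ)+1 := by positivity
        calc ((n:ℝ)+1) * α < ((n:ℝ)+1) * (1/((n:ℝ)+1)) := (mul_lt_mul_iff_right₀ hpos).mpr hα1
          _ = 1 := by field_simp
      have hbα : α < b := by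
        rw [hbdef, lt_div_iff₀ hdenpos]
        have hkα : 0 ≤ (S.card : ℝ) * α := mul_nonneg hScard_pos hα0
        nlinarith
      have hb0 : 0 < b := lt_trans hα hbα
      -- the canonical point y with the same pattern as x
      have hymem : (fun i => if x.1 i < α then α/2 else b) ∈ stdSimplex ℝ (Fin (n+1)) := by
        constructor
        · intro i
          by_cases hi : x.1 i < α <;> simp [hi] <;> positivity
        · rw [Finset.sum_ite, Finset.sum_const, Finset.sum_const, nsmul_eq_mul, nsmul_eq_mul]
          have hcards : (Finset.univ.filter (fun i => x.1 i < α)).card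
              + (Finset.univ.filter (fun i => ¬ x.1 i < α)).card = n + 1 := by
            rw [Finset.card_filter_add_card_filter_not, Finset.card_univ,
              Fintype.card_fin]
          have hA : S.card = (Finset.univ.filter (fun i => x.1 i < α)).card := by
            rw [hSdef]
          have hc2 : ((Finset.univ.filter (fun i => ¬ x.1 i < α)).card : ℝ)
              = ((n:ℝ)+1) - (S.card : ℝ) := by
            have h3 : (Finset.univ.filter (fun i => ¬ x.1 i < α)).card = n + 1 - S.card := by
              omega
            rw [h3, Nat.cast_sub (by omega)]
            push_cast
            ring
          rw [← hSdef, hc2, hbdef]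
          field_simp
          ring
      set y : Spx (n+1) := ⟨fun i => if x.1 i < α then α/2 else b, hymem⟩ with hydef
      have hy' : ∀ j, y.1 j ≠ α := by
        intro j
        by_cases hj : x.1 j < α
        · simp only [hydef, hj, if_true]
          exact ne_of_lt (by linarith)
        · simp only [hydef, hj, if_false]
          exact ne_of_gt hbα
      have hyval : ∀ j, y.1 j = if x.1 j < α then α/2 else b := fun j => rfl
      have hxy : ∀ j, (x.1 j < α ↔ y.1 j < α) := by
        intro j
        rw [hyval j]
        by_cases hj : x.1 j < α
        · rw [if_pos hj]
          exact iff_of_true hj (by linarith)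
        · rw [if_neg hj]
          exact iff_of_false hj (not_lt.mpr hbα.le)
      have hL1 : ∀ i, ((Φ x).1 i < β ↔ (Φ y).1 i < β) := fun i =>
        ⟨key_lemma Φ Φ.continuous hΦoff x y hxy hx' hy' i,
         key_lemma Φ Φ.continuous hΦoff y x (fun j => (hxy j).symm) hy' hx' i⟩
      set w : Spx (n+1) := Φ y with hwdef
      have hw' : ∀ j, w.1 j ≠ β := hΦoff y hy'
      have hweq : ∀ i j, y.1 i = y.1 j → w.1 i = w.1 j := fun i j h =>
        le_antisymm (hΦ.mono y i j h.le) (hΦ.mono y j i h.ge)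
      have hwmono : ∀ i j, y.1 i ≤ y.1 j → w.1 i ≤ w.1 j := hΦ.mono y
      by_cases hw0 : ∃ j, w.1 j < β
      · obtain ⟨j1, hj1⟩ := hw0
        -- no coordinate outside S can have image below β
        have hnotout : ∀ j, ¬ x.1 j < α → ¬ w.1 j < β := by
          intro j hj hwj
          apply hsumcontra w
          intro i
          by_cases hi : x.1 i < α
          · refine lt_of_le_of_lt (hwmono i j ?_) hwj
            simp only [hydef, hi, if_true, hj, if_false]
            linarith
          · have : y.1 i = y.1 j := by simp only [hydef, hi, if_false, hj]
            exact (hweq i j this) ▸ hwj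
        have hj1S : x.1 j1 < α := by
          by_contra h
          exact hnotout j1 h hj1
        have hyw : ∀ i, (x.1 i < α ↔ w.1 i < β) := by
          intro i
          constructor
          · intro hi
            have hyeq : y.1 i = y.1 j1 := by simp only [hydef, hi, if_true, hj1S]
            exact (hweq i j1 hyeq) ▸ hj1
          · intro hwi
            by_contra hi
            exact hnotout i hi hwi
        intro i
        rw [hL1 i]
        exact hyw i
      · -- all image coordinates above β: contradiction via the barycenter
        exfalso
        push_neg at hw0
        have hy0 : y.1 i0 < α := (hxy i0).1 hi0
        have hww : ∀ j, (w.1 j < β ↔ (center n).1 j < β) := by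
          intro j
          constructor
          · intro h
            exact absurd h (not_lt.mpr (hw0 j))
          · intro h
            exact absurd h (hcenβlt j)
        have := key_lemma (Φ.symm : Spx (n+1) → Spx (n+1)) Φ.symm.continuous hΦinvoff
          w (center n) hww hw' hcenβ i0
          (by rw [hwdef, Φ.symm_apply_apply]; exact hy0)
        rw [hcfixinv] at this
        exact (hcenαlt i0) this
    · -- all coordinates of x above α : compare with the barycenter
      push_neg at hS
      intro i
      have hlhs : ¬ x.1 i < α := not_lt.mpr (hS i)
      have hxc : ∀ j, (x.1 j < α ↔ (center n).1 j < α) := by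
        intro j
        constructor
        · intro h
          exact absurd h (not_lt.mpr (hS j))
        · intro h
          exact absurd h (hcenαlt j)
      have hrhs : ¬ (Φ x).1 i < β := by
        intro h
        have := key_lemma (Φ : Spx (n+1) → Spx (n+1)) Φ.continuous hΦoff
          x (center n) hxc hx' hcenα i h
        rw [hcfix] at this
        exact (hcenβlt i) this
      constructor <;> intro h
      · exact absurd h hlhs
      · exact absurd h hrhs
  -- assemble the conclusion
  have key2 : ∀ i, (α < x.1 i ↔ β < (Φ x).1 i) := by
    intro i
    constructor
    · intro h
      have : ¬ (Φ x).1 i < β := fun h' => (not_lt.mpr h.le) ((key i).mpr h')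
      exact lt_of_le_of_ne (not_lt.mp this) (Ne.symm (hΦx' i))
    · intro h
      have : ¬ x.1 i < α := fun h' => (not_lt.mpr h.le) ((key i).mp h')
      exact lt_of_le_of_ne (not_lt.mp this) (Ne.symm (hx' i))
  refine ⟨fun i => ⟨key i, key2 i⟩, ?_⟩
  simp only [minCoord, Finset.lt_inf'_iff]
  constructor
  · intro h i _
    exact (key2 i).mp (h i (Finset.mem_univ i))
  · intro h i _
    exact (key2 i).mpr (h i (Finset.mem_univ i))

end
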